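/- With V_n* as above and q such that the balanced q-integers [1]_q,…,[n]_q are all nonzero, the subspace Y = {x ∈ V_n* ⊗ V_n* : ρ₁(E)x = ρ₂(S⁻¹E)x, ρ₁(F)x = ρ₂(S⁻¹F)x, ρ₁(K)x = ρ₂(S⁻¹K)x} is exactly one-dimensional, spanned by y = Σ_{i=0}^{n} (−1)^i q^{i(n−i+1)} [n choose i]_q e_i ⊗ e_{n−i}. -/

import Mathlib

open TensorProduct

/-- The balanced quantum integer `[m]_q = (q^m − q^{−m})/(q − q^{−1})
= q^{1−m}(1 + q² + ⋯ + q^{2(m−1)})`. -/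
noncomputable def qint {k : Type} [Field k] (q : k) (m : ℕ) : k :=
  q ^ (1 - (m : ℤ)) * ∑ t ∈ Finset.range m, q ^ (2 * t)

/-- The (unbalanced) Gaussian binomial polynomial, via the Pascal recursion. -/
noncomputable def gaussPoly : ℕ → ℕ → Polynomial ℤ
  | _, 0 => 1
  | 0, _ + 1 => 0
  | n + 1, i + 1 => gaussPoly n i + Polynomial.X ^ (i + 1) * gaussPoly n (i + 1)

/-- The balanced `q`-binomial coefficient `[n choose i]_q`. -/
noncomputable def qbinom {k : Type} [Field k] (q : k) (n i : ℕ) : k :=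
  q ^ (-(i * (n - i) : ℤ)) * Polynomial.eval₂ (Int.castRingHom k) (q ^ 2) (gaussPoly n i)

/-- The action of `E` on `V_n*`: `E·e_i = [i]_q e_{i−1}`. -/
noncomputable def Eop {k : Type} [Field k] (q : k) (n : ℕ) :
    (Fin (n + 1) → k) →ₗ[k] (Fin (n + 1) → k) :=
  Matrix.toLin' (Matrix.of fun a b : Fin (n + 1) =>
    if (a : ℕ) + 1 = (b : ℕ) then qint q b else 0)

/-- The action of `F` on `V_n*`: `F·e_i = [n−i]_q e_{i+1}`. -/
noncomputable def Fop {k : Type} [Field k] (q : k) (n : ℕ) :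
    (Fin (n + 1) → k) →ₗ[k] (Fin (n + 1) → k) :=
  Matrix.toLin' (Matrix.of fun a b : Fin (n + 1) =>
    if (a : ℕ) = (b : ℕ) + 1 then qint q (n - b) else 0)

/-- The action of `K` on `V_n*`: `K·e_i = q^{n−2i} e_i`. -/
noncomputable def Kop {k : Type} [Field k] (q : k) (n : ℕ) :
    (Fin (n + 1) → k) →ₗ[k] (Fin (n + 1) → k) :=
  Matrix.toLin' (Matrix.of fun a b : Fin (n + 1) =>
    if a = b then q ^ ((n : ℤ) - 2 * (a : ℕ)) else 0)

/-- The action of `K⁻¹` on `V_n*`: `K⁻¹·e_i = q^{2i−n} e_i`. -/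
noncomputable def Kinvop {k : Type} [Field k] (q : k) (n : ℕ) :
    (Fin (n + 1) → k) →ₗ[k] (Fin (n + 1) → k) :=
  Matrix.toLin' (Matrix.of fun a b : Fin (n + 1) =>
    if a = b then q ^ (2 * ((a : ℕ) : ℤ) - (n : ℤ)) else 0)

/-- The canonical element `y = Σᵢ (−1)^i q^{i(n−i+1)} [n choose i]_q eᵢ ⊗ e_{n−i}`. -/
noncomputable def yElt {k : Type} [Field k] (q : k) (n : ℕ) :
    (Fin (n + 1) → k) ⊗[k] (Fin (n + 1) → k) :=
  ∑ i : Fin (n + 1),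
    ((-1 : k) ^ (i : ℕ) * q ^ ((i : ℕ) * (n - (i : ℕ) + 1)) * qbinom q n i) •
      (Pi.single i (1 : k) ⊗ₜ[k] Pi.single i.rev (1 : k))


section Aux
open Polynomial Finset
set_option synthInstance.maxHeartbeats 1000000
set_option maxHeartbeats 1000000

noncomputable def gsum (m : ℕ) : Polynomial ℤ := ∑ t ∈ Finset.range m, X ^ t

lemma gsum_succ (m : ℕ) : gsum (m + 1) = 1 + X * gsum m := by
  rw [gsum, Finset.sum_range_succ', pow_zero, gsum, Finset.mul_sum]
  simp only [← pow_succ']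
  ring

lemma gsum_succ' (m : ℕ) : gsum (m + 1) = gsum m + X ^ m := by
  rw [gsum, Finset.sum_range_succ, gsum]

lemma gp_zero (n : ℕ) : gaussPoly n 0 = 1 := by cases n <;> rfl

lemma gp_succ (n i : ℕ) : gaussPoly (n + 1) (i + 1) =
    gaussPoly n i + Polynomial.X ^ (i + 1) * gaussPoly n (i + 1) := rfl

lemma gp_gt : ∀ n i : ℕ, n < i → gaussPoly n i = 0
  | 0, _ + 1, _ => rfl
  | n + 1, i + 1, h => by
    rw [gp_succ, gp_gt n i (by omega), gp_gt n (i+1) (by omega)]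
    ring

lemma gp_diag : ∀ n, gaussPoly n n = 1
  | 0 => rfl
  | n + 1 => by
    rw [gp_succ, gp_diag n, gp_gt n (n+1) (by omega)]
    ring

lemma gp_sub_one : ∀ m, gaussPoly (m + 1) m = gsum (m + 1)
  | 0 => by simp [gp_zero, gsum]
  | m + 1 => by
    rw [gp_succ]
    rw [gp_sub_one m, gp_diag, gsum_succ' (m+1)]
    ring

lemma gp_key : ∀ n i : ℕ, i < n →
    gsum (i + 1) * gaussPoly n (i + 1) = gsum (n - i) * gaussPoly n i := by
  intro n
  induction n with
  | zero => omega
  | succ n ih =>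
    intro i hi
    rcases Nat.lt_or_ge i n with hin | hin
    · rcases Nat.eq_zero_or_pos i with rfl | hpos
      · rw [gp_succ, Nat.sub_zero]
        simp only [gp_zero]
        have h0 := ih 0 hin
        rw [gp_zero, Nat.sub_zero] at h0
        have hg1 : gsum (0 + 1) = 1 := by simp [gsum]
        rw [hg1] at h0 ⊢
        rw [gsum_succ n]
        linear_combination (X : Polynomial ℤ) * h0
      · obtain ⟨j, rfl⟩ : ∃ j, i = j + 1 := ⟨i - 1, by omega⟩
        have h1 := ih (j+1) hin
        have h2 := ih j (by omega)
        have e1 : n + 1 - (j + 1) = n - j := by omega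
        have hs1 : gsum (j + 1 + 1) = gsum (j + 1) + X ^ (j+1) := gsum_succ' (j+1)
        have hs2 : gsum (n - j) = 1 + X * gsum (n - (j+1)) := by
          rw [show n - j = (n - (j+1)) + 1 by omega, gsum_succ]
        rw [gp_succ, gp_succ, e1]
        linear_combination (X : Polynomial ℤ)^(j+2) * h1 + h2 +
          (gaussPoly n (j+1)) * hs1 - (X:Polynomial ℤ)^(j+1) * (gaussPoly n (j+1)) * hs2
      
    · have hni : n = i := by omega
      subst hni
      rw [gp_diag, show n + 1 - n = 1 by omega, gp_sub_one]
      have hg1 : gsum 1 = 1 := by simp [gsum]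
      rw [hg1]
      ring

variable {k : Type} [Field k] (q : k)

noncomputable def ev (p : Polynomial ℤ) : k := Polynomial.eval₂ (Int.castRingHom k) (q ^ 2) p

lemma ev_mul (p r : Polynomial ℤ) : ev q (p * r) = ev q p * ev q r := Polynomial.eval₂_mul _ _

lemma ev_gsum (m : ℕ) : ev q (gsum m) = ∑ t ∈ Finset.range m, q ^ (2 * t) := by
  simp [ev, gsum, Polynomial.eval₂_finset_sum, ← pow_mul, mul_comm]

lemma qint_eq (m : ℕ) : qint q m = q ^ (1 - (m : ℤ)) * ev q (gsum m) := by
  rw [qint, ev_gsum]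

lemma qbinom_eq (n i : ℕ) : qbinom q n i = q ^ (-(i * (n - i) : ℤ)) * ev q (gaussPoly n i) :=
  rfl

lemma qbinom_zero (n : ℕ) : qbinom q n 0 = 1 := by
  simp [qbinom_eq, gp_zero, ev]

lemma zpow_shuffle (hq : q ≠ 0) {A B C D : ℤ} {e1 e2 e3 e4 : k} (h : e1 * e2 = e3 * e4)
    (hE : A + B = C + D) : q ^ A * e1 * (q ^ B * e2) = q ^ C * e3 * (q ^ D * e4) := by
  rw [mul_mul_mul_comm, mul_mul_mul_comm (q ^ C), ← zpow_add₀ hq, ← zpow_add₀ hq, hE, h]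

/-- The key identity `[i+1] [n choose i+1] = [n-i] [n choose i]` for `i < n`. -/
lemma qbinom_key (hq : q ≠ 0) (n i : ℕ) (hi : i < n) :
    qint q (i + 1) * qbinom q n (i + 1) = qint q (n - i) * qbinom q n i := by
  obtain ⟨j, rfl⟩ : ∃ j, n = i + j + 1 := ⟨n - i - 1, by omega⟩
  have key := congrArg (ev q) (gp_key (i + j + 1) i (by omega))
  rw [ev_mul, ev_mul] at key
  have e2 : i + j + 1 - i = j + 1 := by omega
  rw [e2] at key ⊢
  rw [qint_eq, qint_eq, qbinom_eq, qbinom_eq]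
  exact zpow_shuffle q hq key (by push_cast; ring)


variable {n : ℕ}

noncomputable abbrev tb (k : Type) [Field k] (n : ℕ) :
    Module.Basis (Fin (n+1) × Fin (n+1)) k ((Fin (n+1) → k) ⊗[k] (Fin (n+1) → k)) :=
  (Pi.basisFun k (Fin (n+1))).tensorProduct (Pi.basisFun k (Fin (n+1)))

lemma repr_tmul (u v : Fin (n+1) → k) (a b : Fin (n+1)) :
    (tb k n).repr (u ⊗ₜ[k] v) (a, b) = u a * v b := by
  rw [Module.Basis.tensorProduct_repr_tmul_apply, Pi.basisFun_repr, Pi.basisFun_repr,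
    smul_eq_mul, mul_comm]

lemma repr_rTensor (f : (Fin (n+1) → k) →ₗ[k] (Fin (n+1) → k))
    (x : (Fin (n+1) → k) ⊗[k] (Fin (n+1) → k)) (a b : Fin (n+1)) :
    (tb k n).repr (f.rTensor _ x) (a, b) =
      ∑ i, f (Pi.single i 1) a * (tb k n).repr x (i, b) := by
  induction x with
  | zero =>
      simp only [map_zero, Finsupp.coe_zero, Pi.zero_apply, mul_zero, Finset.sum_const_zero]
  | tmul u v =>
      rw [LinearMap.rTensor_tmul, repr_tmul]
      have := LinearMap.pi_apply_eq_sum_univ f u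
      rw [this]
      simp only [Finset.sum_apply, Pi.smul_apply, smul_eq_mul, Finset.sum_mul]
      refine Finset.sum_congr rfl fun i _ => ?_
      rw [repr_tmul]
      have : (Pi.single i 1 : Fin (n+1) → k) = fun j => if i = j then 1 else 0 := by
        ext j; simp [Pi.single_apply, eq_comm]
      rw [this]
      ring
  | add x y hx hy => rw [map_add, map_add, Finsupp.add_apply, hx, hy, ← Finset.sum_add_distrib]
                     exact Finset.sum_congr rfl fun i _ => by rw [map_add, Finsupp.add_apply]; ring

lemma repr_lTensor (f : (Fin (n+1) → k) →ₗ[k] (Fin (n+1) → k))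
    (x : (Fin (n+1) → k) ⊗[k] (Fin (n+1) → k)) (a b : Fin (n+1)) :
    (tb k n).repr (f.lTensor _ x) (a, b) =
      ∑ j, f (Pi.single j 1) b * (tb k n).repr x (a, j) := by
  induction x with
  | zero =>
      simp only [map_zero, Finsupp.coe_zero, Pi.zero_apply, mul_zero, Finset.sum_const_zero]
  | tmul u v =>
      rw [LinearMap.lTensor_tmul, repr_tmul]
      rw [LinearMap.pi_apply_eq_sum_univ f v]
      simp only [Finset.sum_apply, Pi.smul_apply, smul_eq_mul, Finset.mul_sum]
      refine Finset.sum_congr rfl fun i _ => ?_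
      rw [repr_tmul]
      have : (Pi.single i 1 : Fin (n+1) → k) = fun j => if i = j then 1 else 0 := by
        ext j; simp [Pi.single_apply, eq_comm]
      rw [this]
      ring
  | add x y hx hy => rw [map_add, map_add, Finsupp.add_apply, hx, hy, ← Finset.sum_add_distrib]
                     exact Finset.sum_congr rfl fun i _ => by rw [map_add, Finsupp.add_apply]; ring

lemma sum_ite_fin (f : Fin (n+1) → k) (m : ℕ) :
    (∑ i : Fin (n+1), if m = (i : ℕ) then f i else 0) =
      if h : m < n + 1 then f ⟨m, h⟩ else 0 := by
  split
  · next h =>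
      rw [Finset.sum_eq_single ⟨m, h⟩]
      · simp
      · intro i _ hne
        exact if_neg fun hc => hne (Fin.ext (by simp [← hc]))
      · simp
  · next h =>
      refine Finset.sum_eq_zero fun i _ => if_neg fun hc => h (by rw [hc]; exact i.isLt)

variable (q : k)

lemma Eop_single (i a : Fin (n+1)) :
    Eop q n (Pi.single i 1) a = if (a : ℕ) + 1 = (i : ℕ) then qint q i else 0 := by
  rw [Eop, Matrix.toLin'_apply, Matrix.mulVec_single_one]; rfl

lemma Fop_single (i a : Fin (n+1)) :
    Fop q n (Pi.single i 1) a = if (a : ℕ) = (i : ℕ) + 1 then qint q (n - (i : ℕ)) else 0 := by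
  rw [Fop, Matrix.toLin'_apply, Matrix.mulVec_single_one]; rfl

lemma Kop_single (i : Fin (n+1)) :
    Kop q n (Pi.single i 1) = q ^ ((n : ℤ) - 2 * (i : ℕ)) • (Pi.single i 1 : Fin (n+1) → k) := by
  rw [Kop, Matrix.toLin'_apply, Matrix.mulVec_single_one]
  ext a
  rcases eq_or_ne a i with rfl | hne
  · simp [Matrix.transpose_apply, Matrix.of_apply]
  · simp [Matrix.transpose_apply, Matrix.of_apply, hne, (Ne.symm hne : ¬ i = a),
      Pi.single_eq_of_ne hne]

lemma Kinvop_single (i : Fin (n+1)) :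
    Kinvop q n (Pi.single i 1) = q ^ (2 * ((i : ℕ) : ℤ) - (n : ℤ)) • (Pi.single i 1 : Fin (n+1) → k) := by
  rw [Kinvop, Matrix.toLin'_apply, Matrix.mulVec_single_one]
  ext a
  rcases eq_or_ne a i with rfl | hne
  · simp [Matrix.transpose_apply, Matrix.of_apply]
  · simp [Matrix.transpose_apply, Matrix.of_apply, hne, (Ne.symm hne : ¬ i = a),
      Pi.single_eq_of_ne hne]

lemma EKinv_single (j b : Fin (n+1)) :
    (-(Eop q n ∘ₗ Kinvop q n)) (Pi.single j 1) b =
      -(q ^ (2 * ((j : ℕ) : ℤ) - (n : ℤ)) *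
        if (b : ℕ) + 1 = (j : ℕ) then qint q j else 0) := by
  rw [LinearMap.neg_apply, LinearMap.comp_apply, Kinvop_single, map_smul]
  rw [Pi.neg_apply, Pi.smul_apply, Eop_single, smul_eq_mul]

lemma KF_single (j b : Fin (n+1)) :
    (-(Kop q n ∘ₗ Fop q n)) (Pi.single j 1) b =
      -(q ^ ((n : ℤ) - 2 * ((b : ℕ) : ℤ)) *
        if (b : ℕ) = (j : ℕ) + 1 then qint q (n - (j : ℕ)) else 0) := by
  rw [LinearMap.neg_apply, LinearMap.comp_apply, Pi.neg_apply]
  have : Fop q n (Pi.single j 1) =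
      ∑ a : Fin (n+1), (if (a : ℕ) = (j : ℕ) + 1 then qint q (n - (j : ℕ)) else 0)
        • (Pi.single a 1 : Fin (n+1) → k) := by
    ext a
    rw [Fop_single]
    simp only [Finset.sum_apply, Pi.smul_apply, smul_eq_mul]
    rw [Finset.sum_eq_single a (fun i _ hne => by
        rw [Pi.single_eq_of_ne (Ne.symm hne), mul_zero]) (by simp)]
    simp
  rw [this, map_sum]
  simp only [map_smul, Kop_single, Finset.sum_apply, Pi.smul_apply, smul_eq_mul]
  rw [Finset.sum_eq_single b (fun i _ hne => by
      rw [Pi.single_eq_of_ne (Ne.symm hne), mul_zero, mul_zero]) (by simp)]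
  simp only [Pi.single_eq_same, mul_one]
  split <;> ring

lemma sum_ite_fin' (f : Fin (n+1) → k) (m : ℕ) (hm : m ≤ n) :
    (∑ i : Fin (n+1), if m = (i : ℕ) + 1 then f i else 0) =
      if h : 1 ≤ m then f ⟨m - 1, by omega⟩ else 0 := by
  rcases m with _ | m'
  · simp
  · rw [dif_pos (by omega)]
    have : ∀ i : Fin (n+1), (if m' + 1 = (i : ℕ) + 1 then f i else 0)
        = (if m' = (i : ℕ) then f i else 0) := by
      intro i; congr 1; simp
    rw [Finset.sum_congr rfl fun i _ => this i, sum_ite_fin f m', dif_pos (by omega)]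
    rfl

lemma reprE1 (x : (Fin (n+1) → k) ⊗[k] (Fin (n+1) → k)) (a b : Fin (n+1)) :
    (tb k n).repr ((Eop q n).rTensor _ x) (a, b) =
      if h : (a : ℕ) + 1 < n + 1 then
        qint q ((a : ℕ) + 1) * (tb k n).repr x (⟨(a : ℕ) + 1, h⟩, b) else 0 := by
  rw [repr_rTensor]
  have : ∀ i : Fin (n+1), Eop q n (Pi.single i 1) a * (tb k n).repr x (i, b)
      = if (a : ℕ) + 1 = (i : ℕ) then qint q (i : ℕ) * (tb k n).repr x (i, b) else 0 := by
    intro i; rw [Eop_single]; split <;> ring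
  rw [Finset.sum_congr rfl fun i _ => this i, sum_ite_fin]

lemma reprE2 (x : (Fin (n+1) → k) ⊗[k] (Fin (n+1) → k)) (a b : Fin (n+1)) :
    (tb k n).repr ((-(Eop q n ∘ₗ Kinvop q n)).lTensor _ x) (a, b) =
      -(if h : (b : ℕ) + 1 < n + 1 then
          q ^ (2 * (((b : ℕ) : ℤ) + 1) - (n : ℤ)) * qint q ((b : ℕ) + 1) *
            (tb k n).repr x (a, ⟨(b : ℕ) + 1, h⟩) else 0) := by
  rw [repr_lTensor]
  have : ∀ j : Fin (n+1),
      (-(Eop q n ∘ₗ Kinvop q n)) (Pi.single j 1) b * (tb k n).repr x (a, j)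
      = -(if (b : ℕ) + 1 = (j : ℕ) then
          q ^ (2 * ((j : ℕ) : ℤ) - (n : ℤ)) * qint q (j : ℕ) * (tb k n).repr x (a, j)
          else 0) := by
    intro j; rw [EKinv_single]; split <;> ring
  rw [Finset.sum_congr rfl fun j _ => this j, Finset.sum_neg_distrib, sum_ite_fin]
  simp

lemma reprF1 (x : (Fin (n+1) → k) ⊗[k] (Fin (n+1) → k)) (a b : Fin (n+1)) :
    (tb k n).repr ((Fop q n).rTensor _ x) (a, b) =
      if h : 1 ≤ (a : ℕ) then
        qint q (n - ((a : ℕ) - 1)) * (tb k n).repr x (⟨(a : ℕ) - 1, by omega⟩, b)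
      else 0 := by
  rw [repr_rTensor]
  have : ∀ i : Fin (n+1), Fop q n (Pi.single i 1) a * (tb k n).repr x (i, b)
      = if (a : ℕ) = (i : ℕ) + 1 then
          qint q (n - (i : ℕ)) * (tb k n).repr x (i, b) else 0 := by
    intro i; rw [Fop_single]; split <;> ring
  rw [Finset.sum_congr rfl fun i _ => this i, sum_ite_fin' _ _ (by omega)]

lemma reprF2 (x : (Fin (n+1) → k) ⊗[k] (Fin (n+1) → k)) (a b : Fin (n+1)) :
    (tb k n).repr ((-(Kop q n ∘ₗ Fop q n)).lTensor _ x) (a, b) =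
      -(if h : 1 ≤ (b : ℕ) then
          q ^ ((n : ℤ) - 2 * ((b : ℕ) : ℤ)) * qint q (n - ((b : ℕ) - 1)) *
            (tb k n).repr x (a, ⟨(b : ℕ) - 1, by omega⟩) else 0) := by
  rw [repr_lTensor]
  have : ∀ j : Fin (n+1),
      (-(Kop q n ∘ₗ Fop q n)) (Pi.single j 1) b * (tb k n).repr x (a, j)
      = -(if (b : ℕ) = (j : ℕ) + 1 then
          q ^ ((n : ℤ) - 2 * ((b : ℕ) : ℤ)) * qint q (n - (j : ℕ)) *
            (tb k n).repr x (a, j) else 0) := by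
    intro j; rw [KF_single]; split <;> ring
  rw [Finset.sum_congr rfl fun j _ => this j, Finset.sum_neg_distrib,
    sum_ite_fin' _ _ (by omega)]

lemma reprK1 (x : (Fin (n+1) → k) ⊗[k] (Fin (n+1) → k)) (a b : Fin (n+1)) :
    (tb k n).repr ((Kop q n).rTensor _ x) (a, b) =
      q ^ ((n : ℤ) - 2 * (a : ℕ)) * (tb k n).repr x (a, b) := by
  rw [repr_rTensor]
  have : ∀ i : Fin (n+1), Kop q n (Pi.single i 1) a * (tb k n).repr x (i, b)
      = if a = i then q ^ ((n : ℤ) - 2 * (i : ℕ)) * (tb k n).repr x (i, b) else 0 := by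
    intro i
    rw [Kop_single, Pi.smul_apply, smul_eq_mul]
    rcases eq_or_ne a i with rfl | hne
    · simp
    · rw [Pi.single_eq_of_ne hne, if_neg hne]; ring
  rw [Finset.sum_congr rfl fun i _ => this i, Finset.sum_ite_eq]
  simp

lemma reprK2 (x : (Fin (n+1) → k) ⊗[k] (Fin (n+1) → k)) (a b : Fin (n+1)) :
    (tb k n).repr ((Kinvop q n).lTensor _ x) (a, b) =
      q ^ (2 * ((b : ℕ) : ℤ) - (n : ℤ)) * (tb k n).repr x (a, b) := by
  rw [repr_lTensor]
  have : ∀ j : Fin (n+1), Kinvop q n (Pi.single j 1) b * (tb k n).repr x (a, j)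
      = if b = j then q ^ (2 * ((j : ℕ) : ℤ) - (n : ℤ)) * (tb k n).repr x (a, j) else 0 := by
    intro j
    rw [Kinvop_single, Pi.smul_apply, smul_eq_mul]
    rcases eq_or_ne b j with rfl | hne
    · simp
    · rw [Pi.single_eq_of_ne hne, if_neg hne]; ring
  rw [Finset.sum_congr rfl fun j _ => this j, Finset.sum_ite_eq]
  simp


noncomputable def W (q : k) (n m : ℕ) : k :=
  (-1 : k) ^ m * q ^ (m * (n - m + 1)) * qbinom q n m

lemma W_zero : W q n 0 = 1 := by
  simp [W, qbinom_zero]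

lemma reprY (a b : Fin (n+1)) :
    (tb k n).repr (yElt q n) (a, b) =
      if (a : ℕ) + (b : ℕ) = n then W q n (a : ℕ) else 0 := by
  rw [yElt, map_sum, Finset.sum_apply']
  simp only [map_smul, Finsupp.smul_apply, smul_eq_mul, repr_tmul]
  rw [Finset.sum_eq_single a]
  · rw [Pi.single_eq_same, one_mul]
    rcases eq_or_ne ((a : ℕ) + (b : ℕ)) n with hab | hab
    · rw [if_pos hab]
      have hb : b = a.rev := by
        apply Fin.ext
        rw [Fin.val_rev]
        omega
      rw [hb, Pi.single_eq_same, mul_one, W]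
    · rw [if_neg hab]
      have hb : b ≠ a.rev := by
        intro hc
        apply hab
        rw [hc, Fin.val_rev]
        omega
      rw [Pi.single_eq_of_ne hb, mul_zero]
  · intro i _ hne
    rw [Pi.single_eq_of_ne (Ne.symm hne), zero_mul, mul_zero]
  · simp

lemma w_rec (hq : q ≠ 0) (i : ℕ) (hi : i < n) :
    qint q (i + 1) * W q n (i + 1) =
      -(q ^ ((n : ℤ) - 2 * (i : ℤ)) * qint q (n - i) * W q n i) := by
  have e : n - (i + 1) + 1 = n - i := by omega
  rw [W, W, e]
  have key := qbinom_key q hq n i hi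
  have hpow : (q : k) ^ ((i + 1) * (n - i)) =
      q ^ ((n : ℤ) - 2 * (i : ℤ)) * q ^ (i * (n - i + 1)) := by
    rw [← zpow_natCast q ((i + 1) * (n - i)), ← zpow_natCast q (i * (n - i + 1)),
      ← zpow_add₀ hq]
    congr 1
    push_cast [Nat.cast_sub hi.le]
    ring
  rw [hpow]
  linear_combination (-((-1 : k) ^ i) * q ^ ((n : ℤ) - 2 * (i : ℤ)) *
    q ^ (i * (n - i + 1))) * key


lemma yK : (Kop q n).rTensor (Fin (n+1) → k) (yElt q n) =
    (Kinvop q n).lTensor (Fin (n+1) → k) (yElt q n) := by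
  apply (tb k n).ext_elem
  rintro ⟨a, b⟩
  rw [reprK1, reprK2, reprY]
  rcases eq_or_ne ((a : ℕ) + (b : ℕ)) n with hab | hab
  · rw [if_pos hab]
    have he : (n : ℤ) - 2 * ((a : ℕ) : ℤ) = 2 * ((b : ℕ) : ℤ) - (n : ℤ) := by omega
    rw [he]
  · rw [if_neg hab, mul_zero, mul_zero]

lemma yE (hq : q ≠ 0) : (Eop q n).rTensor (Fin (n+1) → k) (yElt q n) =
    (-(Eop q n ∘ₗ Kinvop q n)).lTensor (Fin (n+1) → k) (yElt q n) := by
  apply (tb k n).ext_elem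
  rintro ⟨a, b⟩
  rw [reprE1, reprE2]
  by_cases hA : (a : ℕ) + 1 < n + 1
  · rw [dif_pos hA]
    by_cases hB : (b : ℕ) + 1 < n + 1
    · rw [dif_pos hB, reprY, reprY]
      by_cases hab : (a : ℕ) + (b : ℕ) + 1 = n
      · rw [if_pos (show (a : ℕ) + 1 + (b : ℕ) = n by omega),
          if_pos (show (a : ℕ) + ((b : ℕ) + 1) = n by omega)]
        have h2 := w_rec (n := n) q hq (a : ℕ) (by omega)
        have eb : n - (a : ℕ) = (b : ℕ) + 1 := by omega
        have ee : 2 * (((b : ℕ) : ℤ) + 1) - (n : ℤ) = (n : ℤ) - 2 * ((a : ℕ) : ℤ) := by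
          omega
        rw [ee, ← eb]
        exact h2
      · rw [if_neg (show ¬((a : ℕ) + 1 + (b : ℕ) = n) by omega),
          if_neg (show ¬((a : ℕ) + ((b : ℕ) + 1) = n) by omega)]
        simp
    · rw [dif_neg hB, reprY,
        if_neg (show ¬((a : ℕ) + 1 + (b : ℕ) = n) by
          have := a.isLt; have := b.isLt; omega)]
      simp
  · rw [dif_neg hA]
    by_cases hB : (b : ℕ) + 1 < n + 1
    · rw [dif_pos hB, reprY,
        if_neg (show ¬((a : ℕ) + ((b : ℕ) + 1) = n) by
          have := a.isLt; have := b.isLt; omega)]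
      simp
    · rw [dif_neg hB]
      simp

lemma yF (hq : q ≠ 0) : (Fop q n).rTensor (Fin (n+1) → k) (yElt q n) =
    (-(Kop q n ∘ₗ Fop q n)).lTensor (Fin (n+1) → k) (yElt q n) := by
  apply (tb k n).ext_elem
  rintro ⟨a, b⟩
  rw [reprF1, reprF2]
  by_cases hA : 1 ≤ (a : ℕ)
  · rw [dif_pos hA]
    by_cases hB : 1 ≤ (b : ℕ)
    · rw [dif_pos hB, reprY, reprY]
      by_cases hab : (a : ℕ) + (b : ℕ) = n + 1
      · rw [if_pos (show (a : ℕ) - 1 + (b : ℕ) = n by omega),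
          if_pos (show (a : ℕ) + ((b : ℕ) - 1) = n by omega)]
        have h2 := w_rec (n := n) q hq ((a : ℕ) - 1) (by have := a.isLt; omega)
        have ea : (a : ℕ) - 1 + 1 = (a : ℕ) := by omega
        rw [ea] at h2
        have eb : n - ((b : ℕ) - 1) = (a : ℕ) := by omega
        rw [eb]
        have hz : q ^ ((n : ℤ) - 2 * ((b : ℕ) : ℤ)) *
            q ^ ((n : ℤ) - 2 * (((a : ℕ) - 1 : ℕ) : ℤ)) = 1 := by
          rw [← zpow_add₀ hq,
            show (n : ℤ) - 2 * ((b : ℕ) : ℤ) + ((n : ℤ) - 2 * (((a : ℕ) - 1 : ℕ) : ℤ)) = 0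
              by omega, zpow_zero]
        linear_combination (q ^ ((n : ℤ) - 2 * ((b : ℕ) : ℤ))) * h2 -
          (qint q (n - ((a : ℕ) - 1)) * W q n ((a : ℕ) - 1)) * hz
      · rw [if_neg (show ¬((a : ℕ) - 1 + (b : ℕ) = n) by
            have := a.isLt; have := b.isLt; omega),
          if_neg (show ¬((a : ℕ) + ((b : ℕ) - 1) = n) by
            have := a.isLt; have := b.isLt; omega)]
        simp
    · rw [dif_neg hB, reprY,
        if_neg (show ¬((a : ℕ) - 1 + (b : ℕ) = n) by
          have := a.isLt; have := b.isLt; omega)]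
      simp
  · rw [dif_neg hA]
    by_cases hB : 1 ≤ (b : ℕ)
    · rw [dif_pos hB, reprY,
        if_neg (show ¬((a : ℕ) + ((b : ℕ) - 1) = n) by
          have := a.isLt; have := b.isLt; omega)]
      simp
    · rw [dif_neg hB]
      simp

end Aux

set_option synthInstance.maxHeartbeats 1000000
set_option maxHeartbeats 1000000

/-- If the balanced `q`-integers `[1]_q, …, [n]_q` are nonzero and `q^{2m} ≠ 1`
for `1 ≤ m ≤ n`, then the subspace
`Y = {x ∈ V_n* ⊗ V_n* : ρ₁(E)x = ρ₂(S⁻¹E)x, ρ₁(F)x = ρ₂(S⁻¹F)x, ρ₁(K)x = ρ₂(S⁻¹K)x}`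
is exactly one-dimensional, spanned by
`y = Σᵢ (−1)^i q^{i(n−i+1)} [n choose i]_q eᵢ ⊗ e_{n−i}`. -/
theorem stmt15 {k : Type} [Field k] (q : k) (hq : q ≠ 0) (n : ℕ)
    (hqint : ∀ m : ℕ, 1 ≤ m → m ≤ n → qint q m ≠ 0)
    (hroot : ∀ m : ℕ, 1 ≤ m → m ≤ n → q ^ (2 * m) ≠ 1) :
    yElt q n ≠ 0 ∧
      ∀ x : (Fin (n + 1) → k) ⊗[k] (Fin (n + 1) → k),
        (LinearMap.rTensor (Fin (n + 1) → k) (Eop q n) x =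
            LinearMap.lTensor (Fin (n + 1) → k) (-(Eop q n ∘ₗ Kinvop q n)) x ∧
          LinearMap.rTensor (Fin (n + 1) → k) (Fop q n) x =
            LinearMap.lTensor (Fin (n + 1) → k) (-(Kop q n ∘ₗ Fop q n)) x ∧
          LinearMap.rTensor (Fin (n + 1) → k) (Kop q n) x =
            LinearMap.lTensor (Fin (n + 1) → k) (Kinvop q n) x) ↔
        ∃ t : k, x = t • yElt q n := by
  constructor
  · intro h0
    have h1 := congrArg (fun z => (tb k n).repr z
      ((⟨0, by omega⟩ : Fin (n+1)), (⟨n, by omega⟩ : Fin (n+1)))) h0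
    simp only [map_zero, Finsupp.coe_zero, Pi.zero_apply] at h1
    rw [reprY, if_pos (by simp)] at h1
    have h3 : (1 : k) = 0 := by
      rw [← W_zero q]
      exact h1
    exact one_ne_zero h3
  · intro x
    constructor
    · rintro ⟨hE, hF, hK⟩
      have hsupp : ∀ a b : Fin (n+1), (a : ℕ) + (b : ℕ) ≠ n →
          (tb k n).repr x (a, b) = 0 := by
        intro a b hab
        have h1 := congrArg (fun z => (tb k n).repr z (a, b)) hK
        try simp only at h1
        rw [reprK1, reprK2] at h1
        by_contra hcne
        have h2 := mul_right_cancel₀ hcne h1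
        have h3 : q ^ (2 * ((n : ℤ) - (a : ℕ) - (b : ℕ))) = 1 := by
          rw [show 2 * ((n : ℤ) - (a : ℕ) - (b : ℕ)) =
            ((n : ℤ) - 2 * (a : ℕ)) - (2 * ((b : ℕ) : ℤ) - (n : ℤ)) by ring,
            zpow_sub₀ hq, h2, div_self (zpow_ne_zero _ hq)]
        have hm1 : 1 ≤ ((n : ℤ) - (a : ℕ) - (b : ℕ)).natAbs := by
          have := a.isLt; have := b.isLt; omega
        have hm2 : ((n : ℤ) - (a : ℕ) - (b : ℕ)).natAbs ≤ n := by
          have := a.isLt; have := b.isLt; omega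
        apply hroot ((n : ℤ) - (a : ℕ) - (b : ℕ)).natAbs hm1 hm2
        rcases le_or_gt 0 ((n : ℤ) - (a : ℕ) - (b : ℕ)) with hpos | hneg
        · rw [← zpow_natCast q (2 * ((n : ℤ) - (a : ℕ) - (b : ℕ)).natAbs),
            show ((2 * ((n : ℤ) - (a : ℕ) - (b : ℕ)).natAbs : ℕ) : ℤ) =
              2 * ((n : ℤ) - (a : ℕ) - (b : ℕ)) by omega]
          exact h3
        · rw [← zpow_natCast q (2 * ((n : ℤ) - (a : ℕ) - (b : ℕ)).natAbs),
            show ((2 * ((n : ℤ) - (a : ℕ) - (b : ℕ)).natAbs : ℕ) : ℤ) =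
              -(2 * ((n : ℤ) - (a : ℕ) - (b : ℕ))) by omega,
            zpow_neg, h3, inv_one]
      set t := (tb k n).repr x
        ((⟨0, by omega⟩ : Fin (n+1)), (⟨n, by omega⟩ : Fin (n+1))) with ht
      have hrec : ∀ m : ℕ, ∀ _hm : m ≤ n,
          (tb k n).repr x
            ((⟨m, by omega⟩ : Fin (n+1)), (⟨n - m, by omega⟩ : Fin (n+1))) = t * W q n m := by
        intro m
        induction m with
        | zero =>
          intro _
          rw [W_zero, mul_one, ht]
          rfl
        | succ m ih =>
          intro hm1
          have h1 := congrArg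
            (fun z => (tb k n).repr z
              ((⟨m, by omega⟩ : Fin (n+1)), (⟨n - m - 1, by omega⟩ : Fin (n+1)))) hE
          try simp only at h1
          rw [reprE1, reprE2, dif_pos (show m + 1 < n + 1 by omega),
            dif_pos (show (n - m - 1) + 1 < n + 1 by omega)] at h1
          have e1 : n - m - 1 + 1 = n - m := by omega
          simp only [e1] at h1
          have e2 : 2 * (((n - m - 1 : ℕ) : ℤ) + 1) - (n : ℤ) = (n : ℤ) - 2 * (m : ℤ) := by
            omega
          rw [e2, ih (by omega)] at h1
          have h2 := w_rec (n := n) q hq m (by omega)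
          have hqi := hqint (m + 1) (by omega) (by omega)
          apply mul_left_cancel₀ hqi
          have e3 : n - (m + 1) = n - m - 1 := by omega
          simp only [e3]
          rw [h1]
          linear_combination (-t) * h2
      refine ⟨t, ?_⟩
      apply (tb k n).ext_elem
      rintro ⟨a, b⟩
      rw [map_smul, Finsupp.smul_apply, smul_eq_mul, reprY]
      by_cases hab : (a : ℕ) + (b : ℕ) = n
      · rw [if_pos hab]
        have h1 := hrec (a : ℕ) (by omega)
        have ha : (⟨(a : ℕ), by omega⟩ : Fin (n+1)) = a := Fin.ext rfl
        have hb : (⟨n - (a : ℕ), by omega⟩ : Fin (n+1)) = b :=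
          Fin.ext (by show n - (a : ℕ) = (b : ℕ); omega)
        rw [ha, hb] at h1
        exact h1
      · rw [if_neg hab, mul_zero]
        exact hsupp a b hab
    · rintro ⟨t, rfl⟩
      exact ⟨by rw [map_smul, map_smul, yE q hq],
             by rw [map_smul, map_smul, yF q hq],
             by rw [map_smul, map_smul, yK q]⟩
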